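/- Every finite tree T has a pure 2-cycle for the minority process, and T has a non-monochromatic pure 2-cycle for the minority process if and only if T contains an edge (u,w) with deg(u)≥3 and deg(w)≥3. -/

import Mathlib

open SimpleGraph Finset
open scoped Classical

variable {V : Type*}

/-- Number of neighbors of `v` with the same color as `v`. -/
noncomputable def sameCount (G : SimpleGraph V) [Fintype V] (c : V → Bool) (v : V) : ℕ :=
  ((G.neighborFinset v).filter fun u => c u = c v).card

/-- Number of neighbors of `v` with the opposite color. -/
noncomputable def diffCount (G : SimpleGraph V) [Fintype V] (c : V → Bool) (v : V) : ℕ :=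
  ((G.neighborFinset v).filter fun u => c u ≠ c v).card

/-- One round of the minority process. -/
noncomputable def minStep (G : SimpleGraph V) [Fintype V] (c : V → Bool) : V → Bool :=
  fun v => if sameCount G c v ≤ diffCount G c v then c v else !c v

/-- One round of the majority process. -/
noncomputable def majStep (G : SimpleGraph V) [Fintype V] (c : V → Bool) : V → Bool :=
  fun v => if diffCount G c v ≤ sameCount G c v then c v else !c v

/-- Number of edges of `F` incident to `v`. -/
noncomputable def incCount (F : Finset (Sym2 V)) (v : V) : ℕ :=
  (F.filter fun e => v ∈ e).card

/-- The monochromatic edges of a coloring. -/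
noncomputable def monoEdges (G : SimpleGraph V) [Fintype V] (c : V → Bool) : Finset (Sym2 V) :=
  G.edgeFinset.filter fun e => ∀ x ∈ e, ∀ y ∈ e, c x = c y

/-- The multichromatic edges of a coloring. -/
noncomputable def multiEdges (G : SimpleGraph V) [Fintype V] (c : V → Bool) : Finset (Sym2 V) :=
  G.edgeFinset.filter fun e => ∃ x ∈ e, ∃ y ∈ e, c x ≠ c y

lemma count_add [Fintype V] (G : SimpleGraph V) (c : V → Bool) (v : V) :
    sameCount G c v + diffCount G c v = G.degree v := by
  rw [sameCount, diffCount, ← card_neighborFinset_eq_degree]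
  exact Finset.card_filter_add_card_filter_not _

lemma sameCount_not [Fintype V] (G : SimpleGraph V) (c : V → Bool) (v : V) :
    sameCount G (fun u => !c u) v = sameCount G c v := by
  unfold sameCount
  congr 1
  apply Finset.filter_congr
  intro x _
  simp

lemma diffCount_not [Fintype V] (G : SimpleGraph V) (c : V → Bool) (v : V) :
    diffCount G (fun u => !c u) v = diffCount G c v := by
  unfold diffCount
  congr 1
  apply Finset.filter_congr
  intro x _
  simp

lemma pure_of [Fintype V] (G : SimpleGraph V) (c : V → Bool)
    (h : ∀ v, diffCount G c v < sameCount G c v) :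
    (∀ v, minStep G c v ≠ c v) ∧ minStep G (minStep G c) = c := by
  have hstep : minStep G c = fun v => !c v := by
    funext v
    simp [minStep, not_le.mpr (h v), (h v).not_ge]
  constructor
  · intro v
    rw [hstep]
    simp
  · rw [hstep]
    funext v
    have h2 : diffCount G (fun u => !c u) v < sameCount G (fun u => !c u) v := by
      rw [sameCount_not, diffCount_not]; exact h v
    simp [minStep, h2.not_ge]

lemma of_pure [Fintype V] (G : SimpleGraph V) (c : V → Bool)
    (h : ∀ v, minStep G c v ≠ c v) :
    ∀ v, diffCount G c v < sameCount G c v := by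
  intro v
  by_contra hle
  exact h v (by simp [minStep, not_lt.mp hle])

lemma exists_bichrom_edge {G : SimpleGraph V} (c : V → Bool) :
    ∀ {a b : V}, G.Walk a b → c a ≠ c b → ∃ u w, G.Adj u w ∧ c u ≠ c w := by
  intro a b p
  induction p with
  | nil => intro h; exact absurd rfl h
  | cons hadj p ih =>
    intro h
    rename_i x y z
    by_cases hxy : c x = c y
    · obtain ⟨u, w, h1, h2⟩ := ih (hxy ▸ h)
      exact ⟨u, w, h1, h2⟩
    · exact ⟨x, y, hadj, hxy⟩

lemma deg_pos [Fintype V] {G : SimpleGraph V} (hc : G.Connected)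
    (hn : 2 ≤ Fintype.card V) (v : V) : 0 < G.degree v := by
  obtain ⟨w, hw⟩ := Fintype.exists_ne_of_one_lt_card (by omega) v
  obtain ⟨p⟩ := hc.preconnected v w
  cases p with
  | nil => exact absurd rfl hw.symm
  | cons hadj _ => exact G.degree_pos_iff_exists_adj v |>.mpr ⟨_, hadj⟩

theorem stmt16 [Fintype V] (G : SimpleGraph V) (hT : G.IsTree)
    (hn : 2 ≤ Fintype.card V) :
    (∃ c : V → Bool, (∀ v, minStep G c v ≠ c v) ∧ minStep G (minStep G c) = c) ∧
    ((∃ c : V → Bool, ((∀ v, minStep G c v ≠ c v) ∧ minStep G (minStep G c) = c) ∧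
        ¬ (∀ u w : V, c u = c w)) ↔
      ∃ u w : V, G.Adj u w ∧ 3 ≤ G.degree u ∧ 3 ≤ G.degree w) := by
  have hconn := hT.isConnected
  have hdeg := fun v => deg_pos hconn hn v
  constructor
  · refine ⟨fun _ => true, pure_of G _ fun v => ?_⟩
    have h1 : diffCount G (fun _ => true) v = 0 := by
      simp [diffCount]
    have := count_add G (fun _ => true) v
    have := hdeg v
    omega
  constructor
  · rintro ⟨c, ⟨h1, _⟩, hnc⟩
    have hlt := of_pure G c h1
    push_neg at hnc
    obtain ⟨a, b, hab⟩ := hnc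
    obtain ⟨p⟩ := hconn.preconnected a b
    obtain ⟨u, w, huw, hcuw⟩ := exists_bichrom_edge c p hab
    have hdu : 1 ≤ diffCount G c u :=
      Finset.card_pos.mpr ⟨w, Finset.mem_filter.mpr ⟨G.mem_neighborFinset u w |>.mpr huw, hcuw.symm⟩⟩
    have hdw : 1 ≤ diffCount G c w :=
      Finset.card_pos.mpr ⟨u, Finset.mem_filter.mpr ⟨G.mem_neighborFinset w u |>.mpr huw.symm, fun h => hcuw h⟩⟩
    have e1 := count_add G c u
    have e2 := count_add G c w
    have := hlt u; have := hlt w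
    exact ⟨u, w, huw, by omega, by omega⟩
  · rintro ⟨u, w, huw, hu3, hw3⟩
    have hbridge : ¬ (G \ fromEdgeSet {s(u, w)}).Reachable u w := by
      have := (isAcyclic_iff_forall_adj_isBridge.mp hT.IsAcyclic) huw
      exact isBridge_iff.mp this
    set G' : SimpleGraph V := G \ fromEdgeSet {s(u, w)} with hG'
    set c : V → Bool := fun v => decide (G'.Reachable u v) with hc
    have hcu : c u = true := by simp only [hc, decide_eq_true_eq]; exact Reachable.refl u
    have hcw : c w = false := by simp [hc, hbridge]
    have hsame : ∀ v x : V, G'.Adj v x → c x = c v := by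
      intro v x h
      simp only [hc, decide_eq_decide]
      exact ⟨fun hr => hr.trans ⟨h.symm.toWalk⟩, fun hr => hr.trans ⟨h.toWalk⟩⟩
    have hG'adj : ∀ v x : V, G.Adj v x → ¬ s(v,x) = s(u,w) → G'.Adj v x := by
      intro v x h hne
      rw [hG']
      simp only [sdiff_adj, fromEdgeSet_adj, Set.mem_singleton_iff]
      exact ⟨h, fun hh => hne hh.1⟩
    have hdiff : ∀ v : V, ∀ x ∈ (G.neighborFinset v).filter (fun y => c y ≠ c v),
        s(v, x) = s(u, w) := by
      intro v x hx
      rw [Finset.mem_filter, G.mem_neighborFinset] at hx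
      by_contra hne
      exact hx.2 (hsame v x (hG'adj v x hx.1 hne))
    have hkey : ∀ v, diffCount G c v < sameCount G c v := by
      intro v
      have hbound : diffCount G c v ≤ 1 := by
        rw [diffCount]
        by_cases hvu : v = u
        · refine Finset.card_le_one.mpr fun a ha b hb => ?_
          have ha' := hdiff v a ha
          have hb' := hdiff v b hb
          subst hvu
          rw [Sym2.eq_iff] at ha' hb'
          rcases ha' with ⟨_, rfl⟩ | ⟨h1, _⟩
          · rcases hb' with ⟨_, rfl⟩ | ⟨h1, _⟩
            · rfl
            · exact absurd h1 huw.ne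
          · exact absurd h1 huw.ne
        · by_cases hvw : v = w
          · refine Finset.card_le_one.mpr fun a ha b hb => ?_
            have ha' := hdiff v a ha
            have hb' := hdiff v b hb
            subst hvw
            rw [Sym2.eq_iff] at ha' hb'
            rcases ha' with ⟨h1, _⟩ | ⟨_, rfl⟩
            · exact absurd h1 huw.ne'
            · rcases hb' with ⟨h1, _⟩ | ⟨_, rfl⟩
              · exact absurd h1 huw.ne'
              · rfl
          · rw [Finset.card_eq_zero.mpr]
            · omega
            · rw [Finset.eq_empty_iff_forall_notMem]
              intro x hx
              have := hdiff v x hx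
              rw [Sym2.eq_iff] at this
              rcases this with ⟨h1, _⟩ | ⟨h1, _⟩
              · exact hvu h1
              · exact hvw h1
      have hca := count_add G c v
      by_cases hvu : v = u
      · subst hvu; omega
      by_cases hvw : v = w
      · subst hvw; omega
      · -- diffCount = 0 here
        have h0 : diffCount G c v = 0 := by
          rw [diffCount, Finset.card_eq_zero, Finset.eq_empty_iff_forall_notMem]
          intro x hx
          have := hdiff v x hx
          rw [Sym2.eq_iff] at this
          rcases this with ⟨h1, _⟩ | ⟨h1, _⟩
          · exact hvu h1
          · exact hvw h1
        have := hdeg v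
        omega
    refine ⟨c, pure_of G c hkey, fun hmono => ?_⟩
    have := hmono u w
    rw [hcu, hcw] at this
    simp at this
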